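/- For any two lexicographically consecutive vectors λ₁, λ₂ in F_q^t (with respect to any total order on F_q), at least one of λ₁, λ₂ has period t, i.e., its t cyclic shifts are pairwise distinct. -/

import Mathlib

/-- A vector `x ∈ F^t` has (full) period `t` if its `t` cyclic shifts are pairwise
distinct. -/
def HasFullPeriod {F : Type*} {t : ℕ} (x : Fin t → F) : Prop :=
  Function.Injective fun k : Fin t => fun i : Fin t => x (i - k)


section Helpers

variable {α : Type*}

lemma myPeriodMul (f : ℕ → α) (p : ℕ) (h : ∀ m, f m = f (m + p)) :
    ∀ c m, f m = f (m + c * p) := by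
  intro c
  induction c with
  | zero => simp
  | succ c ih =>
    intro m
    have h1 := h (m + c * p)
    have h2 : m + c * p + p = m + (c + 1) * p := by ring
    rw [ih m, h1, h2]

lemma myPeriodGcd : ∀ p (f : ℕ → α) q, (∀ m, f m = f (m + p)) → (∀ m, f m = f (m + q)) →
    ∀ m, f m = f (m + Nat.gcd p q) := by
  intro p
  induction p using Nat.strong_induction_on with
  | _ p ih =>
  intro f q hp hq m
  rcases Nat.eq_zero_or_pos p with rfl | hppos
  · simpa using hq m
  · rw [Nat.gcd_rec p q]
    have hqmod : ∀ m, f m = f (m + q % p) := by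
      intro m
      have h1 : f (m + q % p) = f (m + q % p + (q / p) * p) := myPeriodMul f p hp _ _
      have hmd := Nat.mod_add_div' q p
      have h2 : m + q % p + q / p * p = m + q := by omega
      rw [h1, h2]
      exact hq m
    exact ih (q % p) (Nat.mod_lt _ hppos) f p hqmod hp m

lemma myStepChain (f : ℕ → α) (g n : ℕ) (hg : 0 < g)
    (h : ∀ j, j + g < n → f j = f (j + g)) :
    ∀ j1 j2, j1 < n → j2 < n → j1 % g = j2 % g → f j1 = f j2 := by
  have aux : ∀ c j, j + c * g < n → f j = f (j + c * g) := by
    intro c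
    induction c with
    | zero => simp
    | succ c ih =>
      intro j hj
      have hx : j + (c + 1) * g = j + c * g + g := by ring
      have h1 : j + c * g < n := by omega
      have h2 : j + c * g + g < n := by omega
      rw [ih j h1, h (j + c * g) h2, hx]
  have main : ∀ j1 j2, j1 ≤ j2 → j2 < n → j1 % g = j2 % g → f j1 = f j2 := by
    intro j1 j2 hle hn hmod
    obtain ⟨c, hc⟩ := (Nat.modEq_iff_dvd' hle).mp hmod
    have hcg := Nat.mul_comm c g
    have heq : j2 = j1 + c * g := by omega
    have hlt2 : j1 + c * g < n := by omega
    rw [heq]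
    exact aux c j1 hlt2
  intro j1 j2 h1 h2 hmod
  rcases le_total j1 j2 with hle | hle
  · exact main j1 j2 hle h2 hmod
  · exact (main j2 j1 hle h1 hmod.symm).symm

lemma myModSub (g p j : ℕ) (hgp : g ∣ p) (hpj : p ≤ j) : (j - p) % g = j % g := by
  obtain ⟨c, rfl⟩ := hgp
  have h := Nat.add_mul_mod_self_left (j - g * c) g c
  rw [show j - g * c + g * c = j by omega] at h
  exact h.symm

lemma myFW : ∀ q p n (f : ℕ → α), 0 < p → p ≤ q → p + q ≤ n + Nat.gcd p q →
    (∀ j, j + p < n → f j = f (j + p)) → (∀ j, j + q < n → f j = f (j + q)) →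
    ∀ j1 j2, j1 < n → j2 < n → j1 % Nat.gcd p q = j2 % Nat.gcd p q → f j1 = f j2 := by
  intro q
  induction q using Nat.strong_induction_on with
  | _ q ih =>
  intro p n f hp hpq hn h1 h2
  rcases eq_or_lt_of_le hpq with rfl | hlt
  · rw [Nat.gcd_self]
    exact myStepChain f p n hp h1
  · set g := Nat.gcd p q with hgdef
    have hgp : g ∣ p := Nat.gcd_dvd_left _ _
    have hgq : g ∣ q := Nat.gcd_dvd_right _ _
    have hgpos : 0 < g := Nat.gcd_pos_of_pos_left _ hp
    have hgle : g ≤ p := Nat.le_of_dvd hp hgp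
    have hgsub : g ∣ q - p := Nat.dvd_sub hgq hgp
    have hqpg : g ≤ q - p := Nat.le_of_dvd (by omega) hgsub
    have hgeq : Nat.gcd p (q - p) = g := by
      conv_rhs => rw [hgdef, show q = (q - p) + p by omega, Nat.gcd_add_self_right]
    have h3 : ∀ j, j + (q - p) < n - p → f j = f (j + (q - p)) := by
      intro j hj
      have e1 : f j = f (j + q) := h2 j (by omega)
      have e2 : f (j + (q - p)) = f (j + (q - p) + p) := h1 _ (by omega)
      have e3 : j + (q - p) + p = j + q := by omega
      rw [e1, e2, e3]
    have h1' : ∀ j, j + p < n - p → f j = f (j + p) := fun j hj => h1 j (by omega)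
    have CC : ∀ j1 j2, j1 < n - p → j2 < n - p → j1 % g = j2 % g → f j1 = f j2 := by
      rcases le_total p (q - p) with hle | hle
      · have := ih (q - p) (by omega) p (n - p) f hp hle (by rw [hgeq]; omega) h1' h3
        rwa [hgeq] at this
      · have hgeq2 : Nat.gcd (q - p) p = g := by rw [Nat.gcd_comm]; exact hgeq
        have := ih p (by omega) (q - p) (n - p) f (by omega) hle (by rw [hgeq2]; omega) h3 h1'
        rwa [hgeq2] at this
    have norm : ∀ j, j < n → ∃ j', j' < n - p ∧ j' % g = j % g ∧ f j' = f j := by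
      intro j hj
      by_cases hcase : j < n - p
      · exact ⟨j, hcase, rfl, rfl⟩
      · have hjp : p ≤ j := by omega
        refine ⟨j - p, by omega, myModSub g p j hgp hjp, ?_⟩
        have hf := h1 (j - p) (by omega)
        rw [show j - p + p = j by omega] at hf
        exact hf
    intro j1 j2 hj1 hj2 hmod
    obtain ⟨j1', hj1', hm1, hf1⟩ := norm j1 hj1
    obtain ⟨j2', hj2', hm2, hf2⟩ := norm j2 hj2
    rw [← hf1, ← hf2]
    exact CC j1' j2' hj1' hj2' (by rw [hm1, hm2, hmod])

lemma myDivIneq' (t d e : ℕ) (hd : d ∣ t) (he : e ∣ t) (hd0 : 0 < d) (he0 : 0 < e)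
    (hdt : d < t) (het : e < t) (hde : d ≤ e) : d + d + e ≤ t + Nat.gcd d e := by
  have ht0 : 0 < t := by omega
  have h2e : 2 * e ≤ t := by
    have hd1 : e ∣ t - e := Nat.dvd_sub he dvd_rfl
    have := Nat.le_of_dvd (by omega) hd1
    omega
  set g := Nat.gcd d e with hg
  have hgd : g ∣ d := Nat.gcd_dvd_left _ _
  have hge : g ∣ e := Nat.gcd_dvd_right _ _
  have hg0 : 0 < g := Nat.gcd_pos_of_pos_left _ hd0
  by_cases hcase : d ∣ e
  · have : g = d := Nat.gcd_eq_left hcase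
    omega
  · have hlcm : Nat.lcm d e ∣ t := Nat.lcm_dvd hd he
    have hlcmle : Nat.lcm d e ≤ t := Nat.le_of_dvd ht0 hlcm
    set d' := d / g with hd'
    set e' := e / g with he'
    have hdd : d = g * d' := (Nat.mul_div_cancel' hgd).symm
    have hee : e = g * e' := (Nat.mul_div_cancel' hge).symm
    have hcop : Nat.Coprime d' e' := Nat.coprime_div_gcd_div_gcd hg0
    have hd'0 : 0 < d' := Nat.div_pos (Nat.le_of_dvd hd0 hgd) hg0
    have he'0 : 0 < e' := Nat.div_pos (Nat.le_of_dvd he0 hge) hg0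
    have hd'2 : 2 ≤ d' := by
      by_contra hcon
      push_neg at hcon
      have hd1 : d' = 1 := by omega
      have : d = g := by rw [hdd, hd1, Nat.mul_one]
      exact hcase (this ▸ hge)
    have hd'e' : d' ≤ e' := by
      have hmul : g * d' ≤ g * e' := by omega
      exact Nat.le_of_mul_le_mul_left hmul hg0
    have he'3 : 3 ≤ e' := by
      by_contra hcon
      push_neg at hcon
      have h22 : d' = 2 ∧ e' = 2 := by omega
      rw [h22.1, h22.2] at hcop
      norm_num [Nat.Coprime] at hcop
    have hlcmval : Nat.lcm d e = g * d' * e' := by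
      have h1 : Nat.gcd d e * Nat.lcm d e = d * e := Nat.gcd_mul_lcm d e
      have h2 : g * Nat.lcm d e = g * (g * d' * e') := by
        rw [← hg] at h1
        rw [h1, hdd, hee]
        ring
      exact Nat.eq_of_mul_eq_mul_left hg0 h2
    have hsmall : 2 * d' + e' ≤ d' * e' + 1 := by
      obtain ⟨a, ha⟩ : ∃ a, d' = a + 2 := ⟨d' - 2, by omega⟩
      obtain ⟨b, hb⟩ : ∃ b, e' = b + 3 := ⟨e' - 3, by omega⟩
      rw [ha, hb]
      nlinarith
    have key : 2 * (g * d') + g * e' ≤ g * d' * e' + g := by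
      calc 2 * (g * d') + g * e' = g * (2 * d' + e') := by ring
        _ ≤ g * (d' * e' + 1) := Nat.mul_le_mul_left g hsmall
        _ = g * d' * e' + g := by ring
    omega

lemma myDivIneq (t d e : ℕ) (hd : d ∣ t) (he : e ∣ t) (hd0 : 0 < d) (he0 : 0 < e)
    (hdt : d < t) (het : e < t) : d + e + min d e ≤ t + Nat.gcd d e := by
  rcases le_total d e with h | h
  · have := myDivIneq' t d e hd he hd0 he0 hdt het h
    rw [min_eq_left h]
    omega
  · have := myDivIneq' t e d he hd he0 hd0 het hdt h
    rw [min_eq_right h, Nat.gcd_comm]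
    omega


lemma myLexLt {ι β : Type*} [LinearOrder ι] [LinearOrder β] (x z : ι → β) (i : ι)
    (h1 : ∀ j, j < i → x j = z j) (h2 : x i < z i) : toLex x < toLex z := ⟨i, h1, h2⟩

end Helpers

open Fin.NatCast


/-- For any two lexicographically consecutive vectors `u, v` in `F_q^t` (with respect
to any total order on `F_q`), at least one of `u, v` has period `t`, i.e. its `t`
cyclic shifts are pairwise distinct. -/
theorem consecutive_lex_has_full_period {F : Type*} [Field F] [Fintype F] [LinearOrder F]
    (t : ℕ) (u v : Lex (Fin t → F)) (huv : u ⋖ v) :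
    HasFullPeriod (ofLex u) ∨ HasFullPeriod (ofLex v) := by
  rcases t with _ | n
  · exfalso
    have heq : ofLex u = ofLex v := funext fun i => i.elim0
    have huveq : u = v := heq
    exact absurd (huveq ▸ huv.1) (lt_irrefl v)
  by_contra hcontra
  push_neg at hcontra
  obtain ⟨hnu, hnv⟩ := hcontra
  rw [HasFullPeriod, Function.not_injective_iff] at hnu hnv
  obtain ⟨k1, k2, hk12, hkne⟩ := hnu
  obtain ⟨l1, l2, hl12, hlne⟩ := hnv
  -- cyclic shift identities
  have hu : ∀ j : Fin (n+1), ofLex u j = ofLex u (j + (k1 - k2)) := by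
    intro j
    have h2 := congrFun hk12 (j + k1)
    simp only [add_sub_cancel_right, add_sub_assoc] at h2
    exact h2
  have hv : ∀ j : Fin (n+1), ofLex v j = ofLex v (j + (l1 - l2)) := by
    intro j
    have h2 := congrFun hl12 (j + l1)
    simp only [add_sub_cancel_right, add_sub_assoc] at h2
    exact h2
  set k : Fin (n+1) := k1 - k2 with hkdef
  set l : Fin (n+1) := l1 - l2 with hldef
  have hkne0 : k ≠ 0 := sub_ne_zero.mpr hkne
  have hlne0 : l ≠ 0 := sub_ne_zero.mpr hlne
  have hkval : 0 < k.val := Fin.val_pos_iff.mpr ((Fin.pos_iff_ne_zero' k).mpr hkne0)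
  have hlval : 0 < l.val := Fin.val_pos_iff.mpr ((Fin.pos_iff_ne_zero' l).mpr hlne0)
  -- pass to ℕ
  set U : ℕ → F := fun m => ofLex u (m : Fin (n+1)) with hUdef
  set V : ℕ → F := fun m => ofLex v (m : Fin (n+1)) with hVdef
  have hcastT : ∀ m : ℕ, ((m + (n+1) : ℕ) : Fin (n+1)) = (m : Fin (n+1)) := by
    intro m; rw [Nat.cast_add, Fin.natCast_self, add_zero]
  have hcastval : ∀ (m : ℕ) (a : Fin (n+1)), ((m + a.val : ℕ) : Fin (n+1)) = (m : Fin (n+1)) + a := by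
    intro m a; push_cast [Fin.cast_val_eq_self]; rfl
  have hUt : ∀ m, U m = U (m + (n+1)) := by
    intro m; show ofLex u _ = ofLex u _; rw [hcastT]
  have hVt : ∀ m, V m = V (m + (n+1)) := by
    intro m; show ofLex v _ = ofLex v _; rw [hcastT]
  have hUk : ∀ m, U m = U (m + k.val) := by
    intro m; show ofLex u _ = ofLex u _; rw [hcastval]; exact hu _
  have hVl : ∀ m, V m = V (m + l.val) := by
    intro m; show ofLex v _ = ofLex v _; rw [hcastval]; exact hv _
  -- the divisor periods
  set d : ℕ := Nat.gcd k.val (n+1) with hddef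
  set e : ℕ := Nat.gcd l.val (n+1) with hedef
  have hd0 : 0 < d := Nat.gcd_pos_of_pos_left _ hkval
  have he0 : 0 < e := Nat.gcd_pos_of_pos_left _ hlval
  have hddvd : d ∣ (n+1) := Nat.gcd_dvd_right _ _
  have hedvd : e ∣ (n+1) := Nat.gcd_dvd_right _ _
  have hdlt : d < n+1 := lt_of_le_of_lt (Nat.gcd_le_left _ hkval) k.isLt
  have helt : e < n+1 := lt_of_le_of_lt (Nat.gcd_le_left _ hlval) l.isLt
  have hUd : ∀ m, U m = U (m + d) := myPeriodGcd k.val U (n+1) hUk hUt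
  have hVe : ∀ m, V m = V (m + e) := myPeriodGcd l.val V (n+1) hVl hVt
  have h2d : 2 * d ≤ n+1 := by
    have h1 : d ∣ (n+1) - d := Nat.dvd_sub hddvd dvd_rfl
    have := Nat.le_of_dvd (by omega) h1
    omega
  have h2e : 2 * e ≤ n+1 := by
    have h1 : e ∣ (n+1) - e := Nat.dvd_sub hedvd dvd_rfl
    have := Nat.le_of_dvd (by omega) h1
    omega
  -- pivot
  obtain ⟨i, hpre, hilt⟩ := huv.1
  set I : ℕ := i.val with hIdef
  have hIlt : I < n+1 := i.isLt
  -- suffix maximality / minimality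
  have htop : ∀ j : Fin (n+1), i < j → ∀ c : F, ¬ ofLex u j < c := by
    intro j hj c hc
    have hz1 : u < toLex (Function.update (ofLex u) j c) :=
      myLexLt _ _ j
        (fun j' hj' => by rw [Function.update_of_ne (ne_of_lt hj')]; rfl)
        (by rw [Function.update_self]; exact hc)
    have hz2 : toLex (Function.update (ofLex u) j c) < v :=
      myLexLt _ _ i
        (fun j' hj' => by
          rw [Function.update_of_ne (ne_of_lt (lt_trans hj' hj))]; exact hpre j' hj')
        (by rw [Function.update_of_ne (ne_of_lt hj)]; exact hilt)
    exact huv.2 hz1 hz2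
  have hbot : ∀ j : Fin (n+1), i < j → ∀ c : F, ¬ c < ofLex v j := by
    intro j hj c hc
    have hz1 : u < toLex (Function.update (ofLex v) j c) :=
      myLexLt _ _ i
        (fun j' hj' => by
          rw [Function.update_of_ne (ne_of_lt (lt_trans hj' hj))]; exact hpre j' hj')
        (by rw [Function.update_of_ne (ne_of_lt hj)]; exact hilt)
    have hz2 : toLex (Function.update (ofLex v) j c) < v :=
      myLexLt _ _ j
        (fun j' hj' => by rw [Function.update_of_ne (ne_of_lt hj')]; rfl)
        (by rw [Function.update_self]; exact hc)
    exact huv.2 hz1 hz2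
  -- prefix agreement in ℕ
  have hUV : ∀ m, m < I → U m = V m := by
    intro m hm
    show ofLex u _ = ofLex v _
    exact hpre _ (show ((m : ℕ) : Fin (n+1)) < i by
      rw [Fin.lt_def, Fin.val_cast_of_lt (lt_trans hm hIlt)]; exact hm)
  have hUi : U I = ofLex u i := by show ofLex u _ = _; rw [Fin.cast_val_eq_self]
  have hVi : V I = ofLex v i := by show ofLex v _ = _; rw [Fin.cast_val_eq_self]
  -- i is near the end
  have hId : n+1 ≤ I + d := by
    by_contra hcon
    push_neg at hcon
    have h1 : U I = U (I + d) := hUd I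
    have hval : ((I + d : ℕ) : Fin (n+1)).val = I + d := Fin.val_cast_of_lt hcon
    have hgt : i < ((I + d : ℕ) : Fin (n+1)) := by rw [Fin.lt_def, hval]; omega
    exact htop _ hgt (ofLex v i) (by rw [← show U (I+d) = ofLex u _ from rfl, ← h1, hUi]; exact hilt)
  have hIe : n+1 ≤ I + e := by
    by_contra hcon
    push_neg at hcon
    have h1 : V I = V (I + e) := hVe I
    have hval : ((I + e : ℕ) : Fin (n+1)).val = I + e := Fin.val_cast_of_lt hcon
    have hgt : i < ((I + e : ℕ) : Fin (n+1)) := by rw [Fin.lt_def, hval]; omega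
    exact hbot _ hgt (ofLex u i) (by rw [← show V (I+e) = ofLex v _ from rfl, ← h1, hVi]; exact hilt)
  have hdI : d ≤ I := by omega
  have heI : e ≤ I := by omega
  -- Fine–Wilf on the common prefix
  set g : ℕ := Nat.gcd d e with hgdef
  have hg0 : 0 < g := Nat.gcd_pos_of_pos_left _ hd0
  have hgd : g ∣ d := Nat.gcd_dvd_left _ _
  have hge : g ∣ e := Nat.gcd_dvd_right _ _
  have hgledI : g ≤ d := Nat.le_of_dvd hd0 hgd
  have hsize : d + e ≤ I + g := by
    have := myDivIneq (n+1) d e hddvd hedvd hd0 he0 hdlt helt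
    omega
  have hUd_pre : ∀ j, j + d < I → U j = U (j + d) := fun j _ => hUd j
  have hUe_pre : ∀ j, j + e < I → U j = U (j + e) := by
    intro j hj
    rw [hUV j (by omega), hVe j, ← hUV (j + e) (by omega)]
  have FWU : ∀ j1 j2, j1 < I → j2 < I → j1 % g = j2 % g → U j1 = U j2 := by
    rcases le_total d e with hle | hle
    · exact myFW e d I U hd0 hle (by omega) hUd_pre hUe_pre
    · intro j1 j2 h1 h2 hm
      exact myFW d e I U he0 hle (by rw [Nat.gcd_comm]; omega) hUe_pre hUd_pre j1 j2 h1 h2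
        (by rwa [Nat.gcd_comm e d])
  have FWV : ∀ j1 j2, j1 < I → j2 < I → j1 % g = j2 % g → V j1 = V j2 := by
    intro j1 j2 h1 h2 hm
    rw [← hUV j1 h1, ← hUV j2 h2]
    exact FWU j1 j2 h1 h2 hm
  -- cyclic g-periodicity
  have hUmod : ∀ m, U m = U (m % d) := by
    intro m
    have h1 := myPeriodMul U d hUd (m / d) (m % d)
    rw [Nat.mod_add_div'] at h1
    exact h1.symm
  have hVmod : ∀ m, V m = V (m % e) := by
    intro m
    have h1 := myPeriodMul V e hVe (m / e) (m % e)
    rw [Nat.mod_add_div'] at h1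
    exact h1.symm
  have hUg : ∀ m, U m = U (m + g) := by
    intro m
    rw [hUmod m, hUmod (m + g)]
    refine FWU _ _ (lt_of_lt_of_le (Nat.mod_lt _ hd0) hdI)
      (lt_of_lt_of_le (Nat.mod_lt _ hd0) hdI) ?_
    rw [Nat.mod_mod_of_dvd m hgd, Nat.mod_mod_of_dvd (m + g) hgd, Nat.add_mod_right]
  have hVg : ∀ m, V m = V (m + g) := by
    intro m
    rw [hVmod m, hVmod (m + g)]
    refine FWV _ _ (lt_of_lt_of_le (Nat.mod_lt _ he0) heI)
      (lt_of_lt_of_le (Nat.mod_lt _ he0) heI) ?_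
    rw [Nat.mod_mod_of_dvd m hge, Nat.mod_mod_of_dvd (m + g) hge, Nat.add_mod_right]
  -- final contradiction
  have hfin : U I = V I := by
    have e1 : U (I - g) = U I := by
      have := hUg (I - g)
      rwa [show I - g + g = I by omega] at this
    have e2 : V (I - g) = V I := by
      have := hVg (I - g)
      rwa [show I - g + g = I by omega] at this
    rw [← e1, ← e2, hUV (I - g) (by omega)]
  rw [hUi, hVi] at hfin
  exact absurd hfin (ne_of_lt hilt)
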